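/- arXiv:2502.06399 — 4 statements merged into one kernel-verified Lean document; each statement's English description precedes it below -/
import Mathlib

section
/- Let α ∈ (1/2, 1) ∪ (1, ∞), let a_1, …, a_n be vectors in the probability simplex Δ_d ⊆ ℝ^d, with ∑_{j=1}^n a_j having all entries strictly positive, and let w[1], …, w[n] > 0 with ∑_{j=1}^n w[j] = 1. Define the operator T_f on vectors with strictly positive entries by T_f(u) := ( ∑_{j=1}^n w[j] · a_j^α / ⟨a_j^α, u⟩ )^{(1−α)/α}, where powers of vectors are taken entrywise. Then for all u, v ∈ ℝ^d with strictly positive entries, d_T(T_f(v), T_f(u)) ≤ |1 − 1/α| · d_T(v, u). -/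
open scoped ComplexOrder
open Matrix

noncomputable section

/-- Real power of a matrix via the functional calculus (spectral decomposition);
junk value `A` if `A` is not Hermitian. -/
noncomputable def mpow {d : ℕ} (A : Matrix (Fin d) (Fin d) ℂ) (r : ℝ) :
    Matrix (Fin d) (Fin d) ℂ :=
  if hA : A.IsHermitian then
    (hA.eigenvectorUnitary : Matrix (Fin d) (Fin d) ℂ) *
      Matrix.diagonal (fun i => ((hA.eigenvalues i ^ r : ℝ) : ℂ)) *
      star (hA.eigenvectorUnitary : Matrix (Fin d) (Fin d) ℂ)
  else A

/-- The Loewner order: `A ⪯ B` iff `B - A` is positive semidefinite. -/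
def loewnerLE {d : ℕ} (A B : Matrix (Fin d) (Fin d) ℂ) : Prop := (B - A).PosSemidef

/-- Thompson metric on positive definite matrices (extended-real valued):
`inf { r ≥ 0 | exp (-r) • V ⪯ U ⪯ exp r • V }`, equal to `⊤` if no such `r` exists. -/
noncomputable def dTmat {d : ℕ} (V U : Matrix (Fin d) (Fin d) ℂ) : EReal :=
  sInf {x : EReal | ∃ r : ℝ, 0 ≤ r ∧ x = (r : EReal) ∧
    loewnerLE (Real.exp (-r) • V) U ∧ loewnerLE U (Real.exp r • V)}

open Classical in
/-- Thompson metric on entrywise-positive vectors (extended-real valued):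
`max_i |log (v i / u i)|`. -/
noncomputable def dTvec {d : ℕ} (v u : Fin d → ℝ) : EReal :=
  (⨆ i, if 0 < v i ∧ 0 < u i then ((|Real.log (v i / u i)| : ℝ) : EReal) else (⊤ : EReal)) ⊔ 0

/-- A density matrix: Hermitian positive semidefinite with unit trace. -/
def IsDensityMatrix {d : ℕ} (A : Matrix (Fin d) (Fin d) ℂ) : Prop :=
  A.PosSemidef ∧ A.trace = 1

/-- The operator `T_F (U) = (∑ j, w j • A j ^ α / Tr[A j ^ α * U]) ^ ((1 - α)/α)`. -/
noncomputable def TF {n d : ℕ} (w : Fin n → ℝ) (A : Fin n → Matrix (Fin d) (Fin d) ℂ)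
    (α : ℝ) (U : Matrix (Fin d) (Fin d) ℂ) : Matrix (Fin d) (Fin d) ℂ :=
  mpow (∑ j, ((w j : ℂ) / Matrix.trace (mpow (A j) α * U)) • mpow (A j) α) ((1 - α) / α)

/-- The Petz–Rényi divergence of order `α` (real-valued version, intended for
positive definite `Q`): `(α - 1)⁻¹ * log Tr[A^α * Q^(1-α)]`. -/
noncomputable def petzRenyi {d : ℕ} (α : ℝ) (A Q : Matrix (Fin d) (Fin d) ℂ) : ℝ :=
  (α - 1)⁻¹ * Real.log (Matrix.trace (mpow A α * mpow Q (1 - α))).re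

open Classical in
/-- The Petz–Rényi divergence of order `α`, extended-real valued; `⊤` whenever the
defining formula is not well-defined. -/
noncomputable def petzRenyiE {d : ℕ} (α : ℝ) (A Q : Matrix (Fin d) (Fin d) ℂ) : EReal :=
  if 0 < (Matrix.trace (mpow A α * mpow Q (1 - α))).re ∧
      (1 < α → ∀ x : Fin d → ℂ, Q.mulVec x = 0 → A.mulVec x = 0) then
    (((α - 1)⁻¹ * Real.log (Matrix.trace (mpow A α * mpow Q (1 - α))).re : ℝ) : EReal)
  else ⊤

/-- The objective `F(Q) = ∑ j, w j * D_α(A j ‖ Q)`, extended-real valued. -/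
noncomputable def FE {n d : ℕ} (w : Fin n → ℝ) (A : Fin n → Matrix (Fin d) (Fin d) ℂ)
    (α : ℝ) (Q : Matrix (Fin d) (Fin d) ℂ) : EReal :=
  ∑ j, ((w j : ℝ) : EReal) * petzRenyiE α (A j) Q

/-- Membership in the probability simplex `Δ_d`. -/
def memSimplex {d : ℕ} (q : Fin d → ℝ) : Prop := (∀ i, 0 ≤ q i) ∧ ∑ i, q i = 1

/-- The classical operator `T_f (u) = (∑ j, w j • a j ^ α / ⟨a j ^ α, u⟩) ^ ((1 - α)/α)`,
entrywise. -/
noncomputable def Tf {n d : ℕ} (w : Fin n → ℝ) (a : Fin n → Fin d → ℝ) (α : ℝ)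
    (u : Fin d → ℝ) : Fin d → ℝ :=
  fun i => (∑ j, w j * (a j i ^ α) / (∑ k, (a j k ^ α) * u k)) ^ ((1 - α) / α)

open Classical in
/-- The classical Rényi divergence term, extended-real valued; `⊤` whenever the
defining formula is not well-defined. -/
noncomputable def petzVecE {d : ℕ} (α : ℝ) (a q : Fin d → ℝ) : EReal :=
  if 0 < (∑ i, a i ^ α * q i ^ (1 - α)) ∧ (1 < α → ∀ i, q i = 0 → a i = 0) then
    (((α - 1)⁻¹ * Real.log (∑ i, a i ^ α * q i ^ (1 - α)) : ℝ) : EReal)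
  else ⊤

/-- The classical objective `f(q) = ∑ j, w j * (α-1)⁻¹ * log (∑ i, (a j i)^α * (q i)^(1-α))`,
real-valued version (intended for entrywise positive `q`). -/
noncomputable def fcl {n d : ℕ} (w : Fin n → ℝ) (a : Fin n → Fin d → ℝ) (α : ℝ)
    (q : Fin d → ℝ) : ℝ :=
  ∑ j, w j * ((α - 1)⁻¹ * Real.log (∑ i, a j i ^ α * q i ^ (1 - α)))

/-- Total CES demand in a Fisher market at prices `p`. -/
noncomputable def demand {n d : ℕ} (w : Fin n → ℝ) (a : Fin n → Fin d → ℝ)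
    (ρ : Fin n → ℝ) (p : Fin d → ℝ) : Fin d → ℝ :=
  fun i => ∑ j, w j * (a j i ^ (1 / (1 - ρ j)) * p i ^ (-(1 / (1 - ρ j)))) /
    (∑ k, a j k ^ (1 / (1 - ρ j)) * p k ^ (-(ρ j / (1 - ρ j))))

lemma exists_pos_of_sum_pos' {m : ℕ} (f : Fin m → ℝ) (hf : ∀ k, 0 ≤ f k)
    (h : 0 < ∑ k, f k) : ∃ k, 0 < f k := by
  by_contra hc
  push_neg at hc
  have : ∑ k, f k = 0 :=
    le_antisymm (Finset.sum_nonpos fun k _ => hc k) (Finset.sum_nonneg fun k _ => hf k)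
  linarith

lemma dTvec_eq_of_pos {d : ℕ} (x y : Fin d → ℝ) (hx : ∀ i, 0 < x i) (hy : ∀ i, 0 < y i) :
    dTvec x y = (((⨆ i, |Real.log (x i / y i)|) : ℝ) : EReal) := by
  unfold dTvec
  have hcond : ∀ i, (0 < x i ∧ 0 < y i) := fun i => ⟨hx i, hy i⟩
  simp only [hcond, if_true]
  rcases isEmpty_or_nonempty (Fin d) with hd | hd
  · simp [Real.iSup_of_isEmpty]
  · obtain ⟨i0, hi0⟩ := Finite.exists_max (fun i => |Real.log (x i / y i)|)
    have hbdd : BddAbove (Set.range fun i => |Real.log (x i / y i)|) :=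
      Set.Finite.bddAbove (Set.finite_range _)
    have hsup : (⨆ i, |Real.log (x i / y i)|) = |Real.log (x i0 / y i0)| :=
      le_antisymm (ciSup_le hi0) (le_ciSup hbdd i0)
    rw [hsup]
    apply le_antisymm
    · apply sup_le
      · exact iSup_le fun i => EReal.coe_le_coe_iff.2 (hi0 i)
      · exact EReal.coe_nonneg.2 (abs_nonneg _)
    · exact le_trans (le_iSup (fun i => ((|Real.log (x i / y i)| : ℝ) : EReal)) i0) le_sup_left

/-- the classical operator `T_f` is a contraction with ratio `|1 - 1/α|`
with respect to the Thompson metric on entrywise positive vectors,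
for `α ∈ (1/2, 1) ∪ (1, ∞)`. -/
theorem Tf_contraction {n d : ℕ} (α : ℝ)
    (hα : α ∈ Set.Ioo (1/2 : ℝ) 1 ∪ Set.Ioi (1 : ℝ))
    (a : Fin n → Fin d → ℝ) (ha : ∀ j, memSimplex (a j))
    (hapos : ∀ i, 0 < ∑ j, a j i)
    (w : Fin n → ℝ) (hw : ∀ j, 0 < w j) (hw1 : ∑ j, w j = 1)
    (u v : Fin d → ℝ) (hu : ∀ i, 0 < u i) (hv : ∀ i, 0 < v i) :
    dTvec (Tf w a α v) (Tf w a α u) ≤ ((|1 - 1/α| : ℝ) : EReal) * dTvec v u := by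
  have hα0 : 0 < α := by
    rcases hα with h | h
    · linarith [h.1]
    · have := Set.mem_Ioi.1 h; linarith
  set t : ℝ := ⨆ k, |Real.log (v k / u k)| with ht_def
  have ht0 : 0 ≤ t := Real.iSup_nonneg fun k => abs_nonneg _
  have hbound : ∀ k, |Real.log (v k / u k)| ≤ t := by
    intro k
    rw [ht_def]
    exact le_ciSup (f := fun k => |Real.log (v k / u k)|)
      (Set.Finite.bddAbove (Set.finite_range _)) k
  have hvu : ∀ k, v k ≤ Real.exp t * u k := by
    intro k
    have h1 : Real.log (v k / u k) ≤ t := (abs_le.1 (hbound k)).2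
    have h2 : v k / u k ≤ Real.exp t :=
      (Real.log_le_iff_le_exp (div_pos (hv k) (hu k))).1 h1
    calc v k = (v k / u k) * u k := (div_mul_cancel₀ _ (ne_of_gt (hu k))).symm
    _ ≤ Real.exp t * u k := mul_le_mul_of_nonneg_right h2 (hu k).le
  have huv : ∀ k, u k ≤ Real.exp t * v k := by
    intro k
    have h1 : -t ≤ Real.log (v k / u k) := (abs_le.1 (hbound k)).1
    have h1' : Real.log (u k / v k) ≤ t := by
      rw [show u k / v k = (v k / u k)⁻¹ by rw [inv_div], Real.log_inv]; linarith
    have h2 : u k / v k ≤ Real.exp t :=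
      (Real.log_le_iff_le_exp (div_pos (hu k) (hv k))).1 h1'
    calc u k = (u k / v k) * v k := (div_mul_cancel₀ _ (ne_of_gt (hv k))).symm
    _ ≤ Real.exp t * v k := mul_le_mul_of_nonneg_right h2 (hv k).le
  -- positivity of the inner sums
  have hS : ∀ (j : Fin n) (x : Fin d → ℝ), (∀ i, 0 < x i) →
      0 < ∑ k, a j k ^ α * x k := by
    intro j x hx
    obtain ⟨k, hk⟩ := exists_pos_of_sum_pos' (a j) (ha j).1 (by rw [(ha j).2]; norm_num)
    exact Finset.sum_pos'
      (fun k _ => mul_nonneg (Real.rpow_nonneg ((ha j).1 k) α) (hx k).le)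
      ⟨k, Finset.mem_univ k, mul_pos (Real.rpow_pos_of_pos hk α) (hx k)⟩
  have hN : ∀ (i : Fin d) (x : Fin d → ℝ), (∀ i, 0 < x i) →
      0 < ∑ j, w j * a j i ^ α / (∑ k, a j k ^ α * x k) := by
    intro i x hx
    obtain ⟨j, hj⟩ := exists_pos_of_sum_pos' (fun j => a j i) (fun j => (ha j).1 i) (hapos i)
    exact Finset.sum_pos'
      (fun j _ => div_nonneg (mul_nonneg (hw j).le (Real.rpow_nonneg ((ha j).1 i) α))
        (hS j x hx).le)
      ⟨j, Finset.mem_univ j,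
        div_pos (mul_pos (hw j) (Real.rpow_pos_of_pos hj α)) (hS j x hx)⟩
  -- the comparison for the inner sums
  have hSle : ∀ (j : Fin n) (x y : Fin d → ℝ), (∀ i, 0 < x i) → (∀ i, 0 < y i) →
      (∀ k, x k ≤ Real.exp t * y k) →
      (∑ k, a j k ^ α * x k) ≤ Real.exp t * ∑ k, a j k ^ α * y k := by
    intro j x y hx hy hxy
    rw [Finset.mul_sum]
    apply Finset.sum_le_sum
    intro k _
    calc a j k ^ α * x k ≤ a j k ^ α * (Real.exp t * y k) :=
          mul_le_mul_of_nonneg_left (hxy k) (Real.rpow_nonneg ((ha j).1 k) α)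
    _ = Real.exp t * (a j k ^ α * y k) := by ring
  -- comparison for the sums N
  have hNle : ∀ (i : Fin d) (x y : Fin d → ℝ), (∀ i, 0 < x i) → (∀ i, 0 < y i) →
      (∀ k, x k ≤ Real.exp t * y k) → (∀ k, y k ≤ Real.exp t * x k) →
      (∑ j, w j * a j i ^ α / (∑ k, a j k ^ α * x k))
        ≤ Real.exp t * ∑ j, w j * a j i ^ α / (∑ k, a j k ^ α * y k) := by
    intro i x y hx hy hxy hyx
    rw [Finset.mul_sum]
    apply Finset.sum_le_sum
    intro j _
    have hSx := hS j x hx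
    have hSy := hS j y hy
    have h1 : Real.exp (-t) * (∑ k, a j k ^ α * y k) ≤ ∑ k, a j k ^ α * x k := by
      have := hSle j y x hy hx hyx
      have hexp : (0:ℝ) < Real.exp (-t) := Real.exp_pos _
      calc Real.exp (-t) * (∑ k, a j k ^ α * y k)
          ≤ Real.exp (-t) * (Real.exp t * ∑ k, a j k ^ α * x k) :=
            mul_le_mul_of_nonneg_left this hexp.le
      _ = ∑ k, a j k ^ α * x k := by
            rw [← mul_assoc, ← Real.exp_add]; ring_nf; simp
    have hnum : 0 ≤ w j * a j i ^ α :=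
      mul_nonneg (hw j).le (Real.rpow_nonneg ((ha j).1 i) α)
    calc w j * a j i ^ α / (∑ k, a j k ^ α * x k)
        ≤ w j * a j i ^ α / (Real.exp (-t) * (∑ k, a j k ^ α * y k)) :=
          div_le_div_of_nonneg_left hnum (mul_pos (Real.exp_pos _) hSy) h1
    _ = Real.exp t * (w j * a j i ^ α / (∑ k, a j k ^ α * y k)) := by
          rw [Real.exp_neg]
          field_simp
  -- componentwise bound on the logs for Tf
  have hkey : ∀ i, |Real.log (Tf w a α v i / Tf w a α u i)| ≤ |1 - 1/α| * t := by
    intro i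
    have hNv := hN i v hv
    have hNu := hN i u hu
    have h1 : (∑ j, w j * a j i ^ α / (∑ k, a j k ^ α * v k))
        ≤ Real.exp t * ∑ j, w j * a j i ^ α / (∑ k, a j k ^ α * u k) :=
      hNle i v u hv hu hvu huv
    have h2 : (∑ j, w j * a j i ^ α / (∑ k, a j k ^ α * u k))
        ≤ Real.exp t * ∑ j, w j * a j i ^ α / (∑ k, a j k ^ α * v k) :=
      hNle i u v hu hv huv hvu
    have hlog : |Real.log (∑ j, w j * a j i ^ α / (∑ k, a j k ^ α * v k))
        - Real.log (∑ j, w j * a j i ^ α / (∑ k, a j k ^ α * u k))| ≤ t := by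
      rw [abs_le]
      constructor
      · have := Real.log_le_log hNu h2
        rw [Real.log_mul (Real.exp_ne_zero t) (ne_of_gt hNv), Real.log_exp] at this
        linarith
      · have := Real.log_le_log hNv h1
        rw [Real.log_mul (Real.exp_ne_zero t) (ne_of_gt hNu), Real.log_exp] at this
        linarith
    have habs : |(1 - α)/α| = |1 - 1/α| := by
      have : (1 - α)/α = -(1 - 1/α) := by field_simp; ring
      rw [this, abs_neg]
    unfold Tf
    rw [Real.log_div (ne_of_gt (Real.rpow_pos_of_pos hNv _))
        (ne_of_gt (Real.rpow_pos_of_pos hNu _)),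
      Real.log_rpow hNv, Real.log_rpow hNu, ← mul_sub, abs_mul, habs]
    exact mul_le_mul_of_nonneg_left hlog (abs_nonneg _)
  -- assemble
  have hTv : ∀ i, 0 < Tf w a α v i := fun i => Real.rpow_pos_of_pos (hN i v hv) _
  have hTu : ∀ i, 0 < Tf w a α u i := fun i => Real.rpow_pos_of_pos (hN i u hu) _
  rw [dTvec_eq_of_pos _ _ hTv hTu, dTvec_eq_of_pos _ _ hv hu, ← ht_def,
    ← EReal.coe_mul, EReal.coe_le_coe_iff]
  exact Real.iSup_le hkey (mul_nonneg (abs_nonneg _) ht0)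

end
end

section
/- Let α ∈ (1, ∞), let A_1, …, A_n be density matrices in ℂ^{d×d} with ∑_{j=1}^n A_j positive definite, let w[1], …, w[n] > 0 with ∑_{j=1}^n w[j] = 1, and define T_F(U) := ( ∑_{j=1}^n w[j] · A_j^α / Tr[A_j^α U] )^{(1−α)/α} for positive definite Hermitian U. Then for any positive definite Hermitian Q ∈ ℂ^{d×d} with Tr[Q] ≤ 1, it holds that Tr[ T_F(Q^{1−α})^{1/(1−α)} ] ≤ 1. Moreover, equality holds if and only if T_F(Q^{1−α})^{1/(1−α)} = Q. -/
open scoped ComplexOrder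
open Matrix

noncomputable section

section helpers
variable {d : ℕ} {X A B : Matrix (Fin d) (Fin d) ℂ}

lemma mpow_eq (hA : X.IsHermitian) (r : ℝ) :
    mpow X r = (hA.eigenvectorUnitary : Matrix (Fin d) (Fin d) ℂ) *
      Matrix.diagonal (fun i => ((hA.eigenvalues i ^ r : ℝ) : ℂ)) *
      star (hA.eigenvectorUnitary : Matrix (Fin d) (Fin d) ℂ) := dif_pos hA

lemma mpow_eq_cfc (hA : X.IsHermitian) (r : ℝ) :
    mpow X r = cfc (fun x : ℝ => x ^ r) X := by
  rw [hA.cfc_eq, mpow_eq hA, Matrix.IsHermitian.cfc]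
  rfl

lemma mpow_isHermitian (hA : X.IsHermitian) (r : ℝ) : (mpow X r).IsHermitian := by
  rw [mpow_eq_cfc hA]
  exact (cfc_predicate (fun x : ℝ => x ^ r) X : IsSelfAdjoint _)

lemma contOn_rpow (r : ℝ) (s : Set ℝ) (hs : ∀ x ∈ s, x ≠ 0) :
    ContinuousOn (fun x : ℝ => x ^ r) s := fun x hx =>
  (Real.continuousAt_rpow_const x r (Or.inl (hs x hx))).continuousWithinAt

lemma PosDef.spectrum_pos (hA : X.PosDef) : ∀ x ∈ spectrum ℝ X, 0 < x := by
  intro x hx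
  rw [hA.1.spectrum_real_eq_range_eigenvalues] at hx
  obtain ⟨i, rfl⟩ := hx
  exact hA.eigenvalues_pos i

lemma mpow_one (hA : X.IsHermitian) : mpow X 1 = X := by
  rw [mpow_eq_cfc hA]
  simp only [Real.rpow_one]
  exact cfc_id' ℝ X hA

lemma mpow_mpow (hA : X.PosDef) (r s : ℝ) : mpow (mpow X r) s = mpow X (r * s) := by
  have hsp := PosDef.spectrum_pos hA
  have hf : ContinuousOn (fun x : ℝ => x ^ r) (spectrum ℝ X) :=
    contOn_rpow _ _ fun x hx => (hsp x hx).ne'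
  have hg : ContinuousOn (fun x : ℝ => x ^ s) ((fun x : ℝ => x ^ r) '' spectrum ℝ X) := by
    refine contOn_rpow _ _ ?_
    rintro x ⟨y, hy, rfl⟩
    exact (Real.rpow_pos_of_pos (hsp y hy) r).ne'
  have hcomp := cfc_comp (fun x : ℝ => x ^ s) (fun x : ℝ => x ^ r) X hA.1.isSelfAdjoint hg hf
  rw [mpow_eq_cfc (mpow_isHermitian hA.1 r), mpow_eq_cfc hA.1, ← hcomp, mpow_eq_cfc hA.1]
  refine cfc_congr fun x hx => ?_
  simp only [Function.comp]
  rw [← Real.rpow_mul (hsp x hx).le]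

lemma mpow_mul_mpow_self (hA : X.PosDef) (r s : ℝ) (hrs : r + s = 1) :
    mpow X r * mpow X s = X := by
  have hsp := PosDef.spectrum_pos hA
  have hf : ContinuousOn (fun x : ℝ => x ^ r) (spectrum ℝ X) :=
    contOn_rpow _ _ fun x hx => (hsp x hx).ne'
  have hg : ContinuousOn (fun x : ℝ => x ^ s) (spectrum ℝ X) :=
    contOn_rpow _ _ fun x hx => (hsp x hx).ne'
  rw [mpow_eq_cfc hA.1, mpow_eq_cfc hA.1, ← cfc_mul _ _ X hf hg]
  have : cfc (fun x : ℝ => x ^ r * x ^ s) X = cfc (fun x : ℝ => x) X := by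
    refine cfc_congr fun x hx => ?_
    rw [← Real.rpow_add (hsp x hx), hrs, Real.rpow_one]
  rw [this]
  exact cfc_id' ℝ X hA.1

end helpers

section helpers2
variable {d : ℕ}

lemma qf0 (B : Matrix (Fin d) (Fin d) ℂ) (c : Fin d → ℝ) (x : Fin d → ℂ) :
    star x ⬝ᵥ ((Bᴴ * Matrix.diagonal (fun i => (c i : ℂ)) * B) *ᵥ x)
      = ((∑ i, c i * Complex.normSq ((B *ᵥ x) i) : ℝ) : ℂ) := by
  rw [← Matrix.mulVec_mulVec, ← Matrix.mulVec_mulVec, Matrix.dotProduct_mulVec, ← Matrix.star_mulVec]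
  push_cast
  simp only [dotProduct, Matrix.mulVec_diagonal, Pi.star_apply, Complex.star_def]
  refine Finset.sum_congr rfl fun i _ => ?_
  rw [Complex.normSq_eq_conj_mul_self]
  ring

lemma trace_conj_diag (u : Matrix.unitaryGroup (Fin d) ℂ) (c : Fin d → ℝ) :
    Matrix.trace ((u : Matrix (Fin d) (Fin d) ℂ) * Matrix.diagonal (fun i => (c i : ℂ)) *
      star (u : Matrix (Fin d) (Fin d) ℂ)) = ((∑ i, c i : ℝ) : ℂ) := by
  rw [Matrix.trace_mul_comm, ← mul_assoc, Matrix.mem_unitaryGroup_iff'.mp u.2, one_mul,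
    Matrix.trace_diagonal]
  push_cast
  rfl

lemma row_sum_normSq {W : Matrix (Fin d) (Fin d) ℂ} (hW : W * star W = 1) (i : Fin d) :
    ∑ k, Complex.normSq (W i k) = 1 := by
  have h := congrFun (congrFun hW i) i
  simp only [Matrix.mul_apply, Matrix.one_apply_eq, Matrix.star_apply, Complex.star_def] at h
  have : (((∑ k, Complex.normSq (W i k) : ℝ)) : ℂ) = 1 := by
    rw [← h]
    push_cast
    refine Finset.sum_congr rfl fun k _ => ?_
    rw [Complex.normSq_eq_conj_mul_self]
    ring
  exact_mod_cast this

lemma col_sum_normSq {W : Matrix (Fin d) (Fin d) ℂ} (hW : star W * W = 1) (k : Fin d) :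
    ∑ i, Complex.normSq (W i k) = 1 := by
  have h := congrFun (congrFun hW k) k
  simp only [Matrix.mul_apply, Matrix.one_apply_eq, Matrix.star_apply, Complex.star_def] at h
  have : (((∑ i, Complex.normSq (W i k) : ℝ)) : ℂ) = 1 := by
    rw [← h]
    push_cast
    refine Finset.sum_congr rfl fun i _ => ?_
    rw [Complex.normSq_eq_conj_mul_self]
  exact_mod_cast this


end helpers2

section helpers3
variable {d : ℕ} {X Y : Matrix (Fin d) (Fin d) ℂ}

lemma qf_mpow (hA : X.IsHermitian) (r : ℝ) (x : Fin d → ℂ) :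
    star x ⬝ᵥ (mpow X r *ᵥ x) =
      ((∑ i, hA.eigenvalues i ^ r *
        Complex.normSq ((star (hA.eigenvectorUnitary : Matrix (Fin d) (Fin d) ℂ) *ᵥ x) i) : ℝ) : ℂ) := by
  have h := qf0 (star (hA.eigenvectorUnitary : Matrix (Fin d) (Fin d) ℂ))
    (fun i => hA.eigenvalues i ^ r) x
  rw [mpow_eq hA r]
  rw [← Matrix.star_eq_conjTranspose, star_star] at h
  exact h

lemma qf_self (hA : X.IsHermitian) (x : Fin d → ℂ) :
    star x ⬝ᵥ (X *ᵥ x) =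
      ((∑ i, hA.eigenvalues i *
        Complex.normSq ((star (hA.eigenvectorUnitary : Matrix (Fin d) (Fin d) ℂ) *ᵥ x) i) : ℝ) : ℂ) := by
  have h := qf_mpow hA 1 x
  rw [mpow_one hA] at h
  simpa [Real.rpow_one] using h

lemma trace_mpow (hA : X.IsHermitian) (r : ℝ) :
    (mpow X r).trace = ((∑ i, hA.eigenvalues i ^ r : ℝ) : ℂ) := by
  rw [mpow_eq hA r]
  exact trace_conj_diag _ _

lemma trace_real (hA : X.IsHermitian) :
    X.trace = ((∑ i, hA.eigenvalues i : ℝ) : ℂ) := by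
  conv_lhs => rw [← mpow_one hA]
  rw [trace_mpow hA 1]
  norm_num [Real.rpow_one]

lemma mpow_posDef (hA : X.PosDef) (r : ℝ) : (mpow X r).PosDef := by
  refine Matrix.PosDef.of_dotProduct_mulVec_pos (mpow_isHermitian hA.1 r) fun x hx => ?_
  rw [qf_mpow hA.1 r x]
  have hy : star (hA.1.eigenvectorUnitary : Matrix (Fin d) (Fin d) ℂ) *ᵥ x ≠ 0 := by
    intro h0
    apply hx
    have := congrArg (fun v => (hA.1.eigenvectorUnitary : Matrix (Fin d) (Fin d) ℂ) *ᵥ v) h0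
    simpa [Matrix.mulVec_mulVec, Matrix.mem_unitaryGroup_iff.mp hA.1.eigenvectorUnitary.2]
      using this
  obtain ⟨i, hi⟩ := Function.ne_iff.mp hy
  rw [Complex.zero_lt_real]
  refine Finset.sum_pos' (fun k _ => ?_) ⟨i, Finset.mem_univ i, ?_⟩
  · exact mul_nonneg (Real.rpow_nonneg (hA.posSemidef.eigenvalues_nonneg k) r)
      (Complex.normSq_nonneg _)
  · exact mul_pos (Real.rpow_pos_of_pos (hA.eigenvalues_pos i) r)
      (Complex.normSq_pos.mpr hi)

lemma sum_mulVec {ι : Type*} (s : Finset ι) (X : ι → Matrix (Fin d) (Fin d) ℂ) (x : Fin d → ℂ) :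
    (∑ j ∈ s, X j) *ᵥ x = ∑ j ∈ s, X j *ᵥ x := by
  ext i
  simp only [Matrix.mulVec, dotProduct, Finset.sum_apply, Matrix.sum_apply,
    Finset.sum_mul]
  rw [Finset.sum_comm]

lemma trace_mul_eq (hX : X.IsHermitian) (hY : Y.IsHermitian) (r s : ℝ) :
    (mpow X r * mpow Y s).trace =
    ((∑ i, ∑ k, (hX.eigenvalues i ^ r * hY.eigenvalues k ^ s) *
       Complex.normSq ((star (hX.eigenvectorUnitary : Matrix (Fin d) (Fin d) ℂ) *
         (hY.eigenvectorUnitary : Matrix (Fin d) (Fin d) ℂ)) i k) : ℝ) : ℂ) := by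
  set u := (hX.eigenvectorUnitary : Matrix (Fin d) (Fin d) ℂ) with hu_def
  set v := (hY.eigenvectorUnitary : Matrix (Fin d) (Fin d) ℂ) with hv_def
  set Da := Matrix.diagonal (fun i => ((hX.eigenvalues i ^ r : ℝ) : ℂ)) with hDa
  set Db := Matrix.diagonal (fun k => ((hY.eigenvalues k ^ s : ℝ) : ℂ)) with hDb
  have hu : u * star u = 1 := Matrix.mem_unitaryGroup_iff.mp hX.eigenvectorUnitary.2
  have hu' : star u * u = 1 := Matrix.mem_unitaryGroup_iff'.mp hX.eigenvectorUnitary.2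
  have key : mpow X r * mpow Y s = u * (Da * (star u * v) * Db * (star v * u)) * star u := by
    rw [mpow_eq hX r, mpow_eq hY s, ← hu_def, ← hv_def, ← hDa, ← hDb]
    simp only [mul_assoc, hu, mul_one]
  rw [key, Matrix.trace_mul_comm, ← mul_assoc, hu', one_mul]
  set W := star u * v with hW
  have hsW : star v * u = star W := by
    rw [hW, StarMul.star_mul, star_star]
  rw [hsW]
  have entry : ∀ i, (Da * W * Db * star W) i i =
      ((∑ k, (hX.eigenvalues i ^ r * hY.eigenvalues k ^ s) * Complex.normSq (W i k) : ℝ) : ℂ) := by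
    intro i
    show (∑ k, (Da * W * Db) i k * (star W) k i) = _
    push_cast
    refine Finset.sum_congr rfl fun k _ => ?_
    rw [hDa, hDb]
    simp only [Matrix.mul_diagonal, Matrix.diagonal_mul, Matrix.star_apply, Complex.star_def]
    rw [Complex.normSq_eq_conj_mul_self]
    ring
  rw [Matrix.trace]
  push_cast
  refine Finset.sum_congr rfl fun i _ => ?_
  rw [Matrix.diag]
  rw [entry i]
  push_cast
  rfl
end helpers3
section scalar
variable {α x y s t : ℝ}

lemma tangent_identities (hα : 1 < α) (hx : 0 ≤ x) (hy : 0 < y) (hs : 0 < s) (ht : 0 < t) :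
    x ^ α * y ^ (1 - α) = (y * s ^ α * t ^ (-α)) * (x * t / (y * s)) ^ α ∧
    (y * s ^ α * t ^ (-α)) * (1 + α * (x * t / (y * s) - 1)) =
      α * s ^ (α - 1) * t ^ (1 - α) * x + (1 - α) * s ^ α * t ^ (-α) * y := by
  have hsα : (0:ℝ) < s ^ α := Real.rpow_pos_of_pos hs α
  have htα : (0:ℝ) < t ^ α := Real.rpow_pos_of_pos ht α
  have hyα : (0:ℝ) < y ^ α := Real.rpow_pos_of_pos hy α
  constructor
  · rw [Real.div_rpow (by positivity) (by positivity), Real.mul_rpow hx ht.le,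
      Real.mul_rpow hy.le hs.le, Real.rpow_neg ht.le, Real.rpow_sub hy, Real.rpow_one]
    field_simp
  · rw [Real.rpow_sub hs, Real.rpow_sub ht, Real.rpow_one, Real.rpow_one, Real.rpow_neg ht.le]
    field_simp
    ring

lemma tangent_le (hα : 1 < α) (hx : 0 ≤ x) (hy : 0 < y) (hs : 0 < s) (ht : 0 < t) :
    α * s ^ (α - 1) * t ^ (1 - α) * x + (1 - α) * s ^ α * t ^ (-α) * y ≤ x ^ α * y ^ (1 - α) := by
  obtain ⟨I1, I2⟩ := tangent_identities hα hx hy hs ht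
  set z := x * t / (y * s) with hz
  have hz0 : 0 ≤ z := by positivity
  have hC : (0:ℝ) < y * s ^ α * t ^ (-α) := by positivity
  have hb := one_add_mul_self_le_rpow_one_add (by linarith : (-1:ℝ) ≤ z - 1) hα.le
  rw [add_sub_cancel] at hb
  rw [I1, ← I2]
  exact mul_le_mul_of_nonneg_left hb hC.le

lemma tangent_eq (hα : 1 < α) (hx : 0 ≤ x) (hy : 0 < y) (hs : 0 < s) (ht : 0 < t)
    (h : x ^ α * y ^ (1 - α) = α * s ^ (α - 1) * t ^ (1 - α) * x + (1 - α) * s ^ α * t ^ (-α) * y) :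
    x * t = y * s := by
  obtain ⟨I1, I2⟩ := tangent_identities hα hx hy hs ht
  set z := x * t / (y * s) with hz
  by_contra hne
  have hys : y * s ≠ 0 := by positivity
  have hz1 : z - 1 ≠ 0 := by
    intro h0
    apply hne
    have h1 : z = 1 := by linarith
    rw [hz, div_eq_one_iff_eq hys] at h1
    exact h1
  have hC : (0:ℝ) < y * s ^ α * t ^ (-α) := by positivity
  have hz0 : (-1:ℝ) ≤ z - 1 := by
    have : 0 ≤ z := by positivity
    linarith
  have hb := one_add_mul_self_lt_rpow_one_add hz0 hz1 hα
  rw [add_sub_cancel] at hb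
  rw [I1, ← I2] at h
  have := mul_left_cancel₀ hC.ne' h.symm
  linarith

lemma jensen_sum {d : ℕ} {α : ℝ} (hα : 1 < α) (a b : Fin d → ℝ) (p : Fin d → Fin d → ℝ)
    (ha : ∀ i, 0 ≤ a i) (hb : ∀ k, 0 < b k) (hp : ∀ i k, 0 ≤ p i k)
    (hrow : ∀ i, ∑ k, p i k = 1) (hcol : ∀ k, ∑ i, p i k = 1)
    (hs : 0 < ∑ i, a i) (ht : 0 < ∑ k, b k) :
    (∑ i, a i) ^ α * (∑ k, b k) ^ (1 - α) ≤ ∑ i, ∑ k, (a i ^ α * b k ^ (1 - α)) * p i k ∧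
    (∑ i, ∑ k, (a i ^ α * b k ^ (1 - α)) * p i k = (∑ i, a i) ^ α * (∑ k, b k) ^ (1 - α) →
      ∀ i k, p i k ≠ 0 → a i * (∑ k, b k) = b k * (∑ i, a i)) := by
  set s := ∑ i, a i with hs_def
  set t := ∑ k, b k with ht_def
  set c1 := α * s ^ (α - 1) * t ^ (1 - α) with hc1
  set c2 := (1 - α) * s ^ α * t ^ (-α) with hc2
  have hL : ∀ i k, (c1 * a i + c2 * b k) * p i k ≤ (a i ^ α * b k ^ (1 - α)) * p i k := by
    intro i k
    refine mul_le_mul_of_nonneg_right ?_ (hp i k)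
    rw [hc1, hc2]
    have := tangent_le hα (ha i) (hb k) hs ht
    linarith [this]
  have hLsum : ∑ i, ∑ k, (c1 * a i + c2 * b k) * p i k = s ^ α * t ^ (1 - α) := by
    have expand : ∀ i, ∑ k, (c1 * a i + c2 * b k) * p i k
        = c1 * a i * (∑ k, p i k) + ∑ k, c2 * b k * p i k := by
      intro i
      rw [Finset.mul_sum, ← Finset.sum_add_distrib]
      refine Finset.sum_congr rfl fun k _ => by ring
    have step1 : ∑ i, ∑ k, (c1 * a i + c2 * b k) * p i k = c1 * s + c2 * t := by
      rw [Finset.sum_congr rfl fun i _ => expand i, Finset.sum_add_distrib]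
      congr 1
      · rw [show ∑ i, c1 * a i * (∑ k, p i k) = ∑ i, c1 * a i from
          Finset.sum_congr rfl fun i _ => by rw [hrow i, mul_one], ← Finset.mul_sum]
      · rw [Finset.sum_comm]
        rw [Finset.sum_congr rfl fun k _ => show ∑ i, c2 * b k * p i k = c2 * b k from by
          rw [← Finset.mul_sum, hcol k, mul_one], ← Finset.mul_sum]
    rw [step1, hc1, hc2]
    rw [Real.rpow_sub hs, Real.rpow_sub ht, Real.rpow_one, Real.rpow_one, Real.rpow_neg ht.le]
    have hsα : (0:ℝ) < s ^ α := Real.rpow_pos_of_pos hs α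
    have htα : (0:ℝ) < t ^ α := Real.rpow_pos_of_pos ht α
    field_simp
    ring
  have hineq : s ^ α * t ^ (1 - α) ≤ ∑ i, ∑ k, (a i ^ α * b k ^ (1 - α)) * p i k := by
    rw [← hLsum]
    exact Finset.sum_le_sum fun i _ => Finset.sum_le_sum fun k _ => hL i k
  refine ⟨hineq, fun heq i k hpik => ?_⟩
  have hgap : ∀ i k, 0 ≤ (a i ^ α * b k ^ (1 - α)) * p i k - (c1 * a i + c2 * b k) * p i k :=
    fun i k => sub_nonneg.mpr (hL i k)
  have hgapsum : ∑ i, ∑ k, ((a i ^ α * b k ^ (1 - α)) * p i k - (c1 * a i + c2 * b k) * p i k)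
      = 0 := by
    rw [Finset.sum_congr rfl fun i _ => Finset.sum_sub_distrib _ _]
    rw [Finset.sum_sub_distrib, hLsum, heq, sub_self]
  have hzero : (a i ^ α * b k ^ (1 - α)) * p i k - (c1 * a i + c2 * b k) * p i k = 0 := by
    have h1 : ∀ i, 0 ≤ ∑ k, ((a i ^ α * b k ^ (1 - α)) * p i k - (c1 * a i + c2 * b k) * p i k) :=
      fun i => Finset.sum_nonneg fun k _ => hgap i k
    have h2 : ∑ k', ((a i ^ α * b k' ^ (1 - α)) * p i k' - (c1 * a i + c2 * b k') * p i k') = 0 :=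
      (Finset.sum_eq_zero_iff_of_nonneg (fun i _ => h1 i)).mp hgapsum i (Finset.mem_univ i)
    exact (Finset.sum_eq_zero_iff_of_nonneg (fun k _ => hgap i k)).mp h2 k (Finset.mem_univ k)
  have hppos : 0 < p i k := lt_of_le_of_ne (hp i k) (Ne.symm hpik)
  have htan : a i ^ α * b k ^ (1 - α) = c1 * a i + c2 * b k := by
    have := sub_eq_zero.mp hzero
    exact mul_right_cancel₀ hppos.ne' this
  have := tangent_eq hα (ha i) (hb k) hs ht (by rw [htan]; try rw [hc1, hc2]; try ring)
  exact this

end scalar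

section dpi
variable {d : ℕ} {X Y : Matrix (Fin d) (Fin d) ℂ}

lemma unitary_conj_extract (hX : X.IsHermitian) (hY : Y.IsHermitian) {s t : ℝ}
    (h : ∀ i k, (star (hX.eigenvectorUnitary : Matrix (Fin d) (Fin d) ℂ) *
        (hY.eigenvectorUnitary : Matrix (Fin d) (Fin d) ℂ)) i k ≠ 0 →
      hX.eigenvalues i * t = hY.eigenvalues k * s) :
    t • X = s • Y := by
  set u := (hX.eigenvectorUnitary : Matrix (Fin d) (Fin d) ℂ) with hu_def
  set v := (hY.eigenvectorUnitary : Matrix (Fin d) (Fin d) ℂ) with hv_def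
  have hu : u * star u = 1 := Matrix.mem_unitaryGroup_iff.mp hX.eigenvectorUnitary.2
  have hu' : star u * u = 1 := Matrix.mem_unitaryGroup_iff'.mp hX.eigenvectorUnitary.2
  have hv : v * star v = 1 := Matrix.mem_unitaryGroup_iff.mp hY.eigenvectorUnitary.2
  have hv' : star v * v = 1 := Matrix.mem_unitaryGroup_iff'.mp hY.eigenvectorUnitary.2
  have e : ∀ Z : Matrix (Fin d) (Fin d) ℂ, u * (star u * Z * v) * star v = Z := by
    intro Z
    simp only [mul_assoc, hv, mul_one]
    rw [← mul_assoc, hu, one_mul]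
  have key : star u * (t • X) * v = star u * (s • Y) * v := by
    have hXe : X = u * Matrix.diagonal (fun i => ((hX.eigenvalues i : ℝ) : ℂ)) * star u := by
      conv_lhs => rw [← mpow_one hX]
      rw [mpow_eq hX 1]
      simp [Real.rpow_one]
      rfl
    have hYe : Y = v * Matrix.diagonal (fun k => ((hY.eigenvalues k : ℝ) : ℂ)) * star v := by
      conv_lhs => rw [← mpow_one hY]
      rw [mpow_eq hY 1]
      simp [Real.rpow_one]
      rfl
    rw [Matrix.mul_smul, Matrix.smul_mul, Matrix.mul_smul, Matrix.smul_mul]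
    conv_lhs => rw [hXe]
    conv_rhs => rw [hYe]
    have huZ : ∀ Z : Matrix (Fin d) (Fin d) ℂ, star u * (u * Z) = Z := fun Z => by
      rw [← mul_assoc, hu', one_mul]
    have hvZ : star v * v = 1 := hv'
    -- LHS inner: star u * (u * Da * star u) * v = Da * (star u * v)
    have l1 : star u * (u * Matrix.diagonal (fun i => ((hX.eigenvalues i : ℝ) : ℂ)) * star u) * v
        = Matrix.diagonal (fun i => ((hX.eigenvalues i : ℝ) : ℂ)) * (star u * v) := by
      simp only [mul_assoc, huZ]
    have l2 : star u * (v * Matrix.diagonal (fun k => ((hY.eigenvalues k : ℝ) : ℂ)) * star v) * v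
        = (star u * v) * Matrix.diagonal (fun k => ((hY.eigenvalues k : ℝ) : ℂ)) := by
      simp only [mul_assoc, hv', mul_one]
    rw [l1, l2]
    ext i k
    simp only [Matrix.smul_apply, Matrix.diagonal_mul, Matrix.mul_diagonal, Complex.real_smul]
    by_cases hWik : (star u * v) i k = 0
    · rw [hWik]; ring
    · have hik := h i k hWik
      have hikC : ((hX.eigenvalues i : ℂ)) * (t : ℂ) = ((hY.eigenvalues k : ℂ)) * (s : ℂ) := by
        exact_mod_cast congrArg Complex.ofReal hik
      linear_combination ((star u * v) i k) * hikC
  calc t • X = u * (star u * (t • X) * v) * star v := (e _).symm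
    _ = u * (star u * (s • Y) * v) * star v := by rw [key]
    _ = s • Y := e _

lemma dpi {α : ℝ} (hα : 1 < α) (hX : X.PosDef) (hY : Y.PosDef)
    (hs : 0 < X.trace.re) (ht : 0 < Y.trace.re) :
    X.trace.re ^ α * Y.trace.re ^ (1 - α) ≤ ((mpow X α * mpow Y (1 - α)).trace).re ∧
    (((mpow X α * mpow Y (1 - α)).trace).re = X.trace.re ^ α * Y.trace.re ^ (1 - α) →
      Y.trace.re • X = X.trace.re • Y) := by
  have hXh := hX.1
  have hYh := hY.1
  set u := (hXh.eigenvectorUnitary : Matrix (Fin d) (Fin d) ℂ) with hu_def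
  set v := (hYh.eigenvectorUnitary : Matrix (Fin d) (Fin d) ℂ) with hv_def
  have hu : u * star u = 1 := Matrix.mem_unitaryGroup_iff.mp hXh.eigenvectorUnitary.2
  have hu' : star u * u = 1 := Matrix.mem_unitaryGroup_iff'.mp hXh.eigenvectorUnitary.2
  have hv : v * star v = 1 := Matrix.mem_unitaryGroup_iff.mp hYh.eigenvectorUnitary.2
  have hv' : star v * v = 1 := Matrix.mem_unitaryGroup_iff'.mp hYh.eigenvectorUnitary.2
  set W := star u * v with hW
  have hWu : W * star W = 1 := by
    rw [hW, StarMul.star_mul, star_star,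
      show (star u * v) * (star v * u) = star u * (v * (star v * u)) from by
        simp only [mul_assoc],
      show v * (star v * u) = u from by rw [← mul_assoc, hv, one_mul], hu']
  have hWu' : star W * W = 1 := by
    rw [hW, StarMul.star_mul, star_star,
      show (star v * u) * (star u * v) = star v * (u * (star u * v)) from by
        simp only [mul_assoc],
      show u * (star u * v) = v from by rw [← mul_assoc, hu, one_mul], hv']
  have htrX : X.trace.re = ∑ i, hXh.eigenvalues i := by
    rw [trace_real hXh]; simp
  have htrY : Y.trace.re = ∑ k, hYh.eigenvalues k := by
    rw [trace_real hYh]; simp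
  have htrP : ((mpow X α * mpow Y (1 - α)).trace).re
      = ∑ i, ∑ k, (hXh.eigenvalues i ^ α * hYh.eigenvalues k ^ (1 - α)) *
          Complex.normSq (W i k) := by
    rw [trace_mul_eq hXh hYh α (1 - α)]; simp; rfl
  have hs' : 0 < ∑ i, hXh.eigenvalues i := htrX ▸ hs
  have ht' : 0 < ∑ k, hYh.eigenvalues k := htrY ▸ ht
  have hJ := jensen_sum hα hXh.eigenvalues hYh.eigenvalues
    (fun i k => Complex.normSq (W i k))
    (fun i => hX.posSemidef.eigenvalues_nonneg i) (fun k => hY.eigenvalues_pos k)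
    (fun i k => Complex.normSq_nonneg _)
    (fun i => row_sum_normSq hWu i) (fun k => col_sum_normSq hWu' k) hs' ht'
  constructor
  · rw [htrP, htrX, htrY]
    exact hJ.1
  · intro heq
    rw [htrP, htrX, htrY] at heq
    have hpairs := hJ.2 heq
    have hmat := unitary_conj_extract hXh hYh (s := ∑ i, hXh.eigenvalues i)
      (t := ∑ k, hYh.eigenvalues k) ?_
    · rw [htrX, htrY]
      exact hmat
    · intro i k hWik
      exact hpairs i k (fun h0 => hWik (by rwa [Complex.normSq_eq_zero] at h0))
end dpi

section more
variable {d : ℕ} {X Y : Matrix (Fin d) (Fin d) ℂ}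

lemma dotProduct_sum' {ι : Type*} (s : Finset ι) (v : Fin d → ℂ) (f : ι → Fin d → ℂ) :
    v ⬝ᵥ (∑ j ∈ s, f j) = ∑ j ∈ s, v ⬝ᵥ f j := by
  simp only [dotProduct, Finset.sum_apply, Finset.mul_sum]
  rw [Finset.sum_comm]

lemma trace_mpow_mul_pos (hXp : X.PosSemidef) (hY : Y.PosDef)
    (htr : 0 < X.trace.re) (r s : ℝ) :
    0 < ((mpow X r * mpow Y s).trace).re := by
  have hXh := hXp.1
  have hYh := hY.1
  set u := (hXh.eigenvectorUnitary : Matrix (Fin d) (Fin d) ℂ) with hu_def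
  set v := (hYh.eigenvectorUnitary : Matrix (Fin d) (Fin d) ℂ) with hv_def
  have hu : u * star u = 1 := Matrix.mem_unitaryGroup_iff.mp hXh.eigenvectorUnitary.2
  have hv : v * star v = 1 := Matrix.mem_unitaryGroup_iff.mp hYh.eigenvectorUnitary.2
  have hu' : star u * u = 1 := Matrix.mem_unitaryGroup_iff'.mp hXh.eigenvectorUnitary.2
  set W := star u * v with hW
  have hWu : W * star W = 1 := by
    rw [hW, StarMul.star_mul, star_star,
      show (star u * v) * (star v * u) = star u * (v * (star v * u)) from by
        simp only [mul_assoc],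
      show v * (star v * u) = u from by rw [← mul_assoc, hv, one_mul], hu']
  rw [trace_mul_eq hXh hYh r s]
  simp only [Complex.ofReal_re]
  have htrX : 0 < ∑ i, hXh.eigenvalues i := by
    have : X.trace.re = ∑ i, hXh.eigenvalues i := by rw [trace_real hXh]; simp
    rwa [this] at htr
  obtain ⟨i0, -, hi0⟩ := Finset.exists_lt_of_sum_lt
    (by simpa using htrX : ∑ i : Fin d, (0:ℝ) < ∑ i, hXh.eigenvalues i)
  have hrow : (0:ℝ) < ∑ k, Complex.normSq (W i0 k) := by
    rw [row_sum_normSq hWu i0]; norm_num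
  obtain ⟨k0, -, hk0⟩ := Finset.exists_lt_of_sum_lt
    (by simpa using hrow : ∑ k : Fin d, (0:ℝ) < ∑ k, Complex.normSq (W i0 k))
  have hterm_nonneg : ∀ i k, 0 ≤ (hXh.eigenvalues i ^ r * hYh.eigenvalues k ^ s) *
      Complex.normSq (W i k) := fun i k =>
    mul_nonneg (mul_nonneg (Real.rpow_nonneg (hXp.eigenvalues_nonneg i) r)
      (Real.rpow_pos_of_pos (hY.eigenvalues_pos k) s).le) (Complex.normSq_nonneg _)
  refine Finset.sum_pos' (fun i _ => Finset.sum_nonneg fun k _ => hterm_nonneg i k)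
    ⟨i0, Finset.mem_univ i0, ?_⟩
  refine Finset.sum_pos' (fun k _ => hterm_nonneg i0 k) ⟨k0, Finset.mem_univ k0, ?_⟩
  exact mul_pos (mul_pos (Real.rpow_pos_of_pos hi0 r)
    (Real.rpow_pos_of_pos (hY.eigenvalues_pos k0) s)) hk0

end more


set_option maxHeartbeats 1000000 in
/-- for `α > 1` and positive definite `Q` with `Tr[Q] ≤ 1`, one has
`Tr[T_F(Q^(1-α))^(1/(1-α))] ≤ 1`, with equality iff `T_F(Q^(1-α))^(1/(1-α)) = Q`. -/
theorem TF_trace_bound {n d : ℕ} (α : ℝ) (hα : 1 < α)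
    (A : Fin n → Matrix (Fin d) (Fin d) ℂ) (hA : ∀ j, IsDensityMatrix (A j))
    (hApos : (∑ j, A j).PosDef)
    (w : Fin n → ℝ) (hw : ∀ j, 0 < w j) (hw1 : ∑ j, w j = 1)
    (Q : Matrix (Fin d) (Fin d) ℂ) (hQ : Q.PosDef) (hTr : Q.trace ≤ 1) :
    (mpow (TF w A α (mpow Q (1 - α))) (1 / (1 - α))).trace ≤ 1 ∧
      ((mpow (TF w A α (mpow Q (1 - α))) (1 / (1 - α))).trace = 1 ↔
        mpow (TF w A α (mpow Q (1 - α))) (1 / (1 - α)) = Q) := by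
  classical
  have hn : 0 < n := by
    rcases Nat.eq_zero_or_pos n with h0 | h
    · exfalso; subst h0; simp at hw1
    · exact h
  have j0 : Fin n := ⟨0, hn⟩
  have hd : 0 < d := by
    rcases Nat.eq_zero_or_pos d with h0 | h
    · exfalso
      have h1 := (hA j0).2
      subst h0
      simp [Matrix.trace] at h1
    · exact h
  have : Nonempty (Fin d) := Fin.pos_iff_nonempty.mp hd
  have hα0 : α ≠ 0 := by linarith
  have h1α : (1 : ℝ) - α ≠ 0 := by linarith
  have hQH := hQ.1
  have hAjH : ∀ j, (A j).IsHermitian := fun j => (hA j).1.1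
  set Qβ := mpow Q (1 - α) with hQβ
  set τ : Fin n → ℝ := fun j => ((mpow (A j) α * Qβ).trace).re with hτdef
  have hτ : ∀ j, (mpow (A j) α * Qβ).trace = ((τ j : ℝ) : ℂ) := by
    intro j
    simp only [hτdef]
    simp only [hQβ]
    rw [trace_mul_eq (hAjH j) hQH α (1 - α)]
    simp
  have hAtr : ∀ j, 0 < ((A j).trace).re := by
    intro j
    rw [(hA j).2]
    norm_num
  have hτpos : ∀ j, 0 < τ j := by
    intro j
    simp only [hτdef]
    simp only [hQβ]
    exact trace_mpow_mul_pos (hA j).1 hQ (hAtr j) α (1 - α)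
  set M := ∑ j, (((w j / τ j : ℝ)) : ℂ) • mpow (A j) α with hM
  have hMH : M.IsHermitian := by
    rw [hM, Matrix.IsHermitian, Matrix.conjTranspose_sum]
    refine Finset.sum_congr rfl fun j _ => ?_
    rw [Matrix.conjTranspose_smul, (mpow_isHermitian (hAjH j) α).eq]
    congr 1
    simp [Complex.star_def, Complex.conj_ofReal]
  have hTF : TF w A α Qβ = mpow M ((1 - α) / α) := by
    have hsum : (∑ j, ((w j : ℂ) / (mpow (A j) α * Qβ).trace) • mpow (A j) α) = M := by
      rw [hM]
      exact Finset.sum_congr rfl fun j _ => by rw [hτ j, ← Complex.ofReal_div]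
    unfold TF
    rw [hsum]
  have hMpd : M.PosDef := by
    refine Matrix.PosDef.of_dotProduct_mulVec_pos hMH fun x hx => ?_
    have hMx : star x ⬝ᵥ (M *ᵥ x) =
        ((∑ j, (w j / τ j) * ∑ i, ((hAjH j).eigenvalues i ^ α *
          Complex.normSq ((star ((hAjH j).eigenvectorUnitary : Matrix (Fin d) (Fin d) ℂ) *ᵥ x) i)) : ℝ) : ℂ) := by
      rw [hM, sum_mulVec, dotProduct_sum']
      push_cast
      refine Finset.sum_congr rfl fun j _ => ?_
      rw [Matrix.smul_mulVec, dotProduct_smul, qf_mpow (hAjH j) α x]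
      simp [Complex.real_smul]
    rw [hMx, Complex.zero_lt_real]
    set S : Fin n → ℝ := fun j => ∑ i, ((hAjH j).eigenvalues i ^ α *
      Complex.normSq ((star ((hAjH j).eigenvectorUnitary : Matrix (Fin d) (Fin d) ℂ) *ᵥ x) i))
      with hSdef
    have hS_nonneg : ∀ j, 0 ≤ S j := fun j => Finset.sum_nonneg fun i _ =>
      mul_nonneg (Real.rpow_nonneg ((hA j).1.eigenvalues_nonneg i) α) (Complex.normSq_nonneg _)
    have hc_nonneg : ∀ j, 0 ≤ w j / τ j := fun j => (div_pos (hw j) (hτpos j)).le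
    have htot_nonneg : 0 ≤ ∑ j, (w j / τ j) * S j :=
      Finset.sum_nonneg fun j _ => mul_nonneg (hc_nonneg j) (hS_nonneg j)
    rcases htot_nonneg.lt_or_eq with hlt | heq0
    · exact hlt
    · exfalso
      have hSj : ∀ j, S j = 0 := by
        intro j
        have := (Finset.sum_eq_zero_iff_of_nonneg
          (fun j _ => mul_nonneg (hc_nonneg j) (hS_nonneg j))).mp heq0.symm j (Finset.mem_univ j)
        have hcpos : 0 < w j / τ j := div_pos (hw j) (hτpos j)
        exact (mul_eq_zero.mp this).resolve_left hcpos.ne'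
      have hterm : ∀ j i, (hAjH j).eigenvalues i *
          Complex.normSq ((star ((hAjH j).eigenvectorUnitary : Matrix (Fin d) (Fin d) ℂ) *ᵥ x) i) = 0 := by
        intro j i
        have h0 := (Finset.sum_eq_zero_iff_of_nonneg (fun i _ =>
          mul_nonneg (Real.rpow_nonneg ((hA j).1.eigenvalues_nonneg i) α)
            (Complex.normSq_nonneg _))).mp (hSj j) i (Finset.mem_univ i)
        rcases ((hA j).1.eigenvalues_nonneg i).eq_or_lt with hev | hev
        · rw [← hev, zero_mul]
        · have : Complex.normSq ((star ((hAjH j).eigenvectorUnitary : Matrix (Fin d) (Fin d) ℂ) *ᵥ x) i) = 0 :=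
            (mul_eq_zero.mp h0).resolve_left (Real.rpow_pos_of_pos hev α).ne'
          rw [this, mul_zero]
      have hApx : star x ⬝ᵥ ((∑ j, A j) *ᵥ x) = 0 := by
        rw [sum_mulVec, dotProduct_sum']
        refine Finset.sum_eq_zero fun j _ => ?_
        rw [qf_self (hAjH j) x]
        have hz : ∑ i, (hAjH j).eigenvalues i *
            Complex.normSq ((star ((hAjH j).eigenvectorUnitary : Matrix (Fin d) (Fin d) ℂ) *ᵥ x) i) = 0 :=
          Finset.sum_eq_zero fun i _ => hterm j i
        rw [hz]
        simp
      have := hApos.dotProduct_mulVec_pos hx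
      rw [hApx] at this
      exact lt_irrefl _ this
  set R := mpow M (1 / α) with hR
  have hgoal_eq : mpow (TF w A α Qβ) (1 / (1 - α)) = R := by
    have he : (1 - α) / α * (1 / (1 - α)) = 1 / α := by
      field_simp
    rw [hTF, mpow_mpow hMpd, he]
  have hRpd : R.PosDef := mpow_posDef hMpd _
  have hRH := hRpd.1
  have hMR : mpow R α = M := by
    rw [hR, mpow_mpow hMpd, one_div, inv_mul_cancel₀ hα0, mpow_one hMpd.1]
  have htr1 : (mpow R α * Qβ).trace = 1 := by
    rw [hMR, hM, Finset.sum_mul, Matrix.trace_sum]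
    rw [Finset.sum_congr rfl fun j _ => show
        ((((w j / τ j : ℝ) : ℂ)) • mpow (A j) α * Qβ).trace = ((w j : ℝ) : ℂ) from by
      rw [Matrix.smul_mul, Matrix.trace_smul, hτ j, smul_eq_mul, ← Complex.ofReal_mul,
        div_mul_cancel₀ _ (hτpos j).ne']]
    exact_mod_cast congrArg Complex.ofReal hw1
  have hRtr : R.trace = ((R.trace.re : ℝ) : ℂ) := by
    rw [trace_real hRH]; norm_num
  have hRtr' : R.trace.re = ∑ i, hRH.eigenvalues i := by
    rw [trace_real hRH]; simp
  have hs0 : 0 < R.trace.re := by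
    rw [hRtr']
    exact Finset.sum_pos (fun i _ => hRpd.eigenvalues_pos i) Finset.univ_nonempty
  have hq0 : 0 < Q.trace.re := by
    rw [show Q.trace.re = ∑ i, hQH.eigenvalues i from by rw [trace_real hQH]; simp]
    exact Finset.sum_pos (fun i _ => hQ.eigenvalues_pos i) Finset.univ_nonempty
  have hq1 : Q.trace.re ≤ 1 := by
    have := (Complex.le_def.mp hTr).1
    simpa using this
  have hD := dpi hα hRpd hQ hs0 hq0
  rw [← hQβ] at hD
  have htrRe : ((mpow R α * Qβ).trace).re = 1 := by rw [htr1]; norm_num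
  have hq1α : 1 ≤ Q.trace.re ^ (1 - α) :=
    Real.one_le_rpow_of_pos_of_le_one_of_nonpos hq0 hq1 (by linarith)
  have hineq := hD.1
  rw [htrRe] at hineq
  have hs1 : R.trace.re ≤ 1 := by
    by_contra hgt
    push_neg at hgt
    have h1 : 1 < R.trace.re ^ α :=
      (Real.one_lt_rpow_iff_of_pos hs0).mpr (Or.inl ⟨hgt, by linarith⟩)
    have h2 : R.trace.re ^ α ≤ R.trace.re ^ α * Q.trace.re ^ (1 - α) :=
      le_mul_of_one_le_right (Real.rpow_nonneg hs0.le α) hq1α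
    linarith
  constructor
  · rw [hgoal_eq, hRtr]
    calc ((R.trace.re : ℝ) : ℂ) ≤ ((1 : ℝ) : ℂ) := Complex.real_le_real.mpr hs1
      _ = 1 := by norm_num
  · rw [hgoal_eq]
    constructor
    · intro h1
      have hs_eq : R.trace.re = 1 := by rw [h1]; norm_num
      have hqle : Q.trace.re ^ (1 - α) ≤ 1 := by
        rw [hs_eq, Real.one_rpow, one_mul] at hineq
        exact hineq
      have hqeq : Q.trace.re ^ (1 - α) = 1 := le_antisymm hqle hq1α
      have hq_eq : Q.trace.re = 1 := by
        by_contra hne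
        have hlt : Q.trace.re < 1 := lt_of_le_of_ne hq1 hne
        have : 1 < Q.trace.re ^ (1 - α) :=
          (Real.one_lt_rpow_iff_of_pos hq0).mpr (Or.inr ⟨hlt, by linarith⟩)
        linarith
      have hEq := hD.2 (by rw [htrRe, hs_eq, hqeq, Real.one_rpow, one_mul])
      rw [hs_eq, hq_eq] at hEq
      simpa using hEq
    · intro h2
      have hQQ : mpow Q α * Qβ = Q := by
        rw [hQβ]
        exact mpow_mul_mpow_self hQ α (1 - α) (by ring)
      rw [h2] at htr1
      rw [hQQ] at htr1
      rw [h2]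
      exact htr1


end
end

section
/- Let α ∈ (0, 1) ∪ (1, ∞), let A_1, …, A_n be density matrices in ℂ^{d×d} with ∑_{j=1}^n A_j positive definite, let w[1], …, w[n] > 0 with ∑_{j=1}^n w[j] = 1, and set F(Q) := ∑_{j=1}^n w[j] D_α(A_j ‖ Q). Then for all positive definite Hermitian U, V ∈ ℂ^{d×d}, F(U) − F(V) ≤ |1/(α−1)| · d_T( V^{1−α}, U^{1−α} ). -/
open scoped ComplexOrder
open Matrix

noncomputable section

section thompsonHelpers
variable {d : ℕ}

private lemma posDef_conj' {Q W : Matrix (Fin d) (Fin d) ℂ} (hQ : Q.PosDef)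
    (h1 : W * star W = 1) : (W * Q * star W).PosDef := by
  refine Matrix.PosDef.of_dotProduct_mulVec_pos ?_ ?_
  · rw [Matrix.star_eq_conjTranspose]
    exact Matrix.isHermitian_mul_mul_conjTranspose W hQ.1
  · intro x hx
    have hy : star W *ᵥ x ≠ 0 := by
      intro h
      apply hx
      have h' := congrArg (W *ᵥ ·) h
      simpa [Matrix.mulVec_mulVec, h1] using h'
    have key : star x ⬝ᵥ ((W * Q * star W) *ᵥ x)
        = star (star W *ᵥ x) ⬝ᵥ (Q *ᵥ (star W *ᵥ x)) := by
      have hstar : star (star W *ᵥ x) = star x ᵥ* W := by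
        rw [Matrix.star_mulVec, Matrix.star_eq_conjTranspose, Matrix.conjTranspose_conjTranspose]
      rw [hstar, ← Matrix.mulVec_mulVec, ← Matrix.mulVec_mulVec, Matrix.dotProduct_mulVec]
    rw [key]
    exact hQ.dotProduct_mulVec_pos hy

private lemma trace_psd_re_nonneg' {N : Matrix (Fin d) (Fin d) ℂ} (hN : N.PosSemidef) :
    0 ≤ (Matrix.trace N).re := by
  have hdiag : ∀ i, 0 ≤ N i i := by
    intro i
    have := hN.dotProduct_mulVec_nonneg (Pi.single i 1)
    simpa [Matrix.mulVec_single, dotProduct, Pi.single_apply] using this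
  have : (0 : ℂ) ≤ Matrix.trace N := Finset.sum_nonneg fun i _ => hdiag i
  exact (Complex.nonneg_iff.mp this).1

open scoped MatrixOrder in
private lemma trace_mul_psd_re_nonneg' {P M : Matrix (Fin d) (Fin d) ℂ}
    (hP : P.PosSemidef) (hM : M.PosSemidef) : 0 ≤ (Matrix.trace (P * M)).re := by
  have hsq := CFC.sqrt_mul_sqrt_self P hP.nonneg
  have hS : (CFC.sqrt P).PosSemidef := (CFC.sqrt_nonneg P).posSemidef
  have h1 : P * M = CFC.sqrt P * (CFC.sqrt P * M) := by rw [← Matrix.mul_assoc, hsq]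
  rw [h1, Matrix.trace_mul_comm]
  have hpsd : (CFC.sqrt P * M * CFC.sqrt P).PosSemidef := by
    have := hM.mul_mul_conjTranspose_same (CFC.sqrt P)
    rwa [hS.1.eq] at this
  exact trace_psd_re_nonneg' hpsd

private lemma trace_re_mono' {P X Y : Matrix (Fin d) (Fin d) ℂ} (hP : P.PosSemidef)
    (h : (Y - X).PosSemidef) : (Matrix.trace (P * X)).re ≤ (Matrix.trace (P * Y)).re := by
  have := trace_mul_psd_re_nonneg' hP h
  rw [Matrix.mul_sub, Matrix.trace_sub, Complex.sub_re] at this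
  linarith

private lemma mpow_posSemidef' {A : Matrix (Fin d) (Fin d) ℂ} (hA : A.PosSemidef) (r : ℝ) :
    (mpow A r).PosSemidef := by
  rw [mpow, dif_pos hA.1, Matrix.star_eq_conjTranspose]
  refine (Matrix.posSemidef_diagonal_iff.mpr fun i => ?_).mul_mul_conjTranspose_same _
  exact Complex.zero_le_real.mpr (Real.rpow_nonneg (hA.eigenvalues_nonneg i) r)

private lemma mpow_posDef' {Q : Matrix (Fin d) (Fin d) ℂ} (hQ : Q.PosDef) (r : ℝ) :
    (mpow Q r).PosDef := by
  rw [mpow, dif_pos hQ.1]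
  refine posDef_conj' (Matrix.PosDef.diagonal fun i => ?_) ?_
  · exact Complex.zero_lt_real.mpr (Real.rpow_pos_of_pos (hQ.eigenvalues_pos i) r)
  · exact Matrix.mem_unitaryGroup_iff.mp hQ.1.eigenvectorUnitary.2

private lemma sum_eigenvalues_eq_one' {A : Matrix (Fin d) (Fin d) ℂ} (hA : A.IsHermitian)
    (htr : A.trace = 1) : ∑ i, hA.eigenvalues i = 1 := by
  have h := hA.spectral_theorem
  have h2 : A.trace = Matrix.trace (Matrix.diagonal (RCLike.ofReal ∘ hA.eigenvalues) *
      (star (hA.eigenvectorUnitary : Matrix (Fin d) (Fin d) ℂ) *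
        (hA.eigenvectorUnitary : Matrix (Fin d) (Fin d) ℂ))) := by
    conv_lhs => rw [h, Unitary.conjStarAlgAut_apply]
    rw [Matrix.mul_assoc, Matrix.trace_mul_comm]
    rw [Matrix.mul_assoc]
  rw [Unitary.coe_star_mul_self, Matrix.mul_one, htr] at h2
  have h3 : (1 : ℂ) = ((∑ i, hA.eigenvalues i : ℝ) : ℂ) := by
    rw [h2, Matrix.trace_diagonal]
    push_cast
    rfl
  exact_mod_cast h3.symm

private lemma trace_mpow_mul_pos' {A Q : Matrix (Fin d) (Fin d) ℂ}
    (hA : A.PosSemidef) (htr : A.trace = 1) (hQ : Q.PosDef) (s : ℝ) :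
    0 < (Matrix.trace (mpow A s * Q)).re := by
  rw [mpow, dif_pos hA.1]
  set W : Matrix (Fin d) (Fin d) ℂ := (hA.1.eigenvectorUnitary : Matrix (Fin d) (Fin d) ℂ)
    with hW
  set N : Matrix (Fin d) (Fin d) ℂ := star W * Q * W with hNdef
  have hN : N.PosDef := by
    have := posDef_conj' hQ (W := star W) (by
      rw [star_star]; exact Unitary.coe_star_mul_self hA.1.eigenvectorUnitary)
    rwa [star_star] at this
  have htrace : Matrix.trace (W * Matrix.diagonal (fun i => ((hA.1.eigenvalues i ^ s : ℝ) : ℂ))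
      * star W * Q)
      = ∑ i, ((hA.1.eigenvalues i ^ s : ℝ) : ℂ) * N i i := by
    have e1 : W * Matrix.diagonal (fun i => ((hA.1.eigenvalues i ^ s : ℝ) : ℂ)) * star W * Q
        = W * (Matrix.diagonal (fun i => ((hA.1.eigenvalues i ^ s : ℝ) : ℂ)) * (star W * Q)) := by
      simp [Matrix.mul_assoc]
    rw [e1, Matrix.trace_mul_comm]
    have e2 : Matrix.diagonal (fun i => ((hA.1.eigenvalues i ^ s : ℝ) : ℂ)) * (star W * Q) * W
        = Matrix.diagonal (fun i => ((hA.1.eigenvalues i ^ s : ℝ) : ℂ)) * N := by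
      simp [hNdef, Matrix.mul_assoc]
    rw [e2, Matrix.trace]
    simp [Matrix.diag, Matrix.diagonal_mul]
  rw [htrace]
  have hre : (∑ i, ((hA.1.eigenvalues i ^ s : ℝ) : ℂ) * N i i).re
      = ∑ i, (hA.1.eigenvalues i ^ s) * (N i i).re := by
    rw [Complex.re_sum]
    congr 1
    funext i
    simp [Complex.mul_re]
  rw [hre]
  have hNdiag : ∀ i, 0 < (N i i).re := by
    intro i
    have hx : (Pi.single i 1 : Fin d → ℂ) ≠ 0 := by
      intro h
      have := congrFun h i
      simp at this
    have := hN.dotProduct_mulVec_pos hx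
    have hval : star (Pi.single i 1 : Fin d → ℂ) ⬝ᵥ (N *ᵥ Pi.single i 1) = N i i := by
      simp [Matrix.mulVec_single, dotProduct, Pi.single_apply]
    rw [hval] at this
    exact (Complex.pos_iff.mp this).1
  have hexists : ∃ i, 0 < hA.1.eigenvalues i := by
    by_contra hcon
    push_neg at hcon
    have hzero : ∀ i, hA.1.eigenvalues i = 0 := fun i =>
      le_antisymm (hcon i) (hA.eigenvalues_nonneg i)
    have := sum_eigenvalues_eq_one' hA.1 htr
    simp [hzero] at this
  obtain ⟨i0, hi0⟩ := hexists
  refine Finset.sum_pos' (fun i _ => ?_) ⟨i0, Finset.mem_univ i0, ?_⟩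
  · exact mul_nonneg (Real.rpow_nonneg (hA.eigenvalues_nonneg i) s) (hNdiag i).le
  · exact mul_pos (Real.rpow_pos_of_pos hi0 s) (hNdiag i0)

private lemma petz_diff_le' {α : ℝ} {A U V : Matrix (Fin d) (Fin d) ℂ}
    (hA : A.PosSemidef) (htr : A.trace = 1) (hU : U.PosDef) (hV : V.PosDef) {r : ℝ}
    (h1 : (mpow U (1 - α) - Real.exp (-r) • mpow V (1 - α)).PosSemidef)
    (h2 : (Real.exp r • mpow V (1 - α) - mpow U (1 - α)).PosSemidef) :
    petzRenyi α A U - petzRenyi α A V ≤ |1 / (α - 1)| * r := by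
  have hxpos : 0 < (Matrix.trace (mpow A α * mpow U (1 - α))).re :=
    trace_mpow_mul_pos' hA htr (mpow_posDef' hU (1 - α)) α
  have hypos : 0 < (Matrix.trace (mpow A α * mpow V (1 - α))).re :=
    trace_mpow_mul_pos' hA htr (mpow_posDef' hV (1 - α)) α
  have hP := mpow_posSemidef' hA α
  have hb2 : (Matrix.trace (mpow A α * mpow U (1 - α))).re ≤
      Real.exp r * (Matrix.trace (mpow A α * mpow V (1 - α))).re := by
    have h := trace_re_mono' hP h2
    have e : (Matrix.trace (mpow A α * (Real.exp r • mpow V (1 - α)))).re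
        = Real.exp r * (Matrix.trace (mpow A α * mpow V (1 - α))).re := by
      rw [Matrix.mul_smul, Matrix.trace_smul, Complex.smul_re, smul_eq_mul]
    rwa [e] at h
  have hb1 : Real.exp (-r) * (Matrix.trace (mpow A α * mpow V (1 - α))).re ≤
      (Matrix.trace (mpow A α * mpow U (1 - α))).re := by
    have h := trace_re_mono' hP h1
    have e : (Matrix.trace (mpow A α * (Real.exp (-r) • mpow V (1 - α)))).re
        = Real.exp (-r) * (Matrix.trace (mpow A α * mpow V (1 - α))).re := by
      rw [Matrix.mul_smul, Matrix.trace_smul, Complex.smul_re, smul_eq_mul]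
    rwa [e] at h
  rw [petzRenyi, petzRenyi]
  set x := (Matrix.trace (mpow A α * mpow U (1 - α))).re with hxdef
  set y := (Matrix.trace (mpow A α * mpow V (1 - α))).re with hydef
  have hlog2 : Real.log x ≤ r + Real.log y := by
    have := Real.log_le_log hxpos hb2
    rwa [Real.log_mul (Real.exp_ne_zero r) hypos.ne', Real.log_exp] at this
  have hlog1 : -r + Real.log y ≤ Real.log x := by
    have := Real.log_le_log (mul_pos (Real.exp_pos _) hypos) hb1
    rwa [Real.log_mul (Real.exp_ne_zero _) hypos.ne', Real.log_exp] at this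
  have habs : |Real.log x - Real.log y| ≤ r := abs_le.mpr ⟨by linarith, by linarith⟩
  calc (α - 1)⁻¹ * Real.log x - (α - 1)⁻¹ * Real.log y
      = (α - 1)⁻¹ * (Real.log x - Real.log y) := by ring
    _ ≤ |(α - 1)⁻¹ * (Real.log x - Real.log y)| := le_abs_self _
    _ = |1 / (α - 1)| * |Real.log x - Real.log y| := by rw [abs_mul, one_div]
    _ ≤ |1 / (α - 1)| * r := mul_le_mul_of_nonneg_left habs (abs_nonneg _)

end thompsonHelpers

/-- the variation of the objective `F` is controlled by the Thompson
metric: `F(U) - F(V) ≤ |1/(α-1)| * d_T(V^(1-α), U^(1-α))`. -/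
theorem fval_thompson_bound {n d : ℕ} (α : ℝ)
    (hα : α ∈ Set.Ioo (0 : ℝ) 1 ∪ Set.Ioi (1 : ℝ))
    (A : Fin n → Matrix (Fin d) (Fin d) ℂ) (hA : ∀ j, IsDensityMatrix (A j))
    (hApos : (∑ j, A j).PosDef)
    (w : Fin n → ℝ) (hw : ∀ j, 0 < w j) (hw1 : ∑ j, w j = 1)
    (U V : Matrix (Fin d) (Fin d) ℂ) (hU : U.PosDef) (hV : V.PosDef) :
    (((∑ j, w j * petzRenyi α (A j) U) - (∑ j, w j * petzRenyi α (A j) V) : ℝ) : EReal) ≤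
      ((|1 / (α - 1)| : ℝ) : EReal) * dTmat (mpow V (1 - α)) (mpow U (1 - α)) := by
  classical
  have hα1 : α - 1 ≠ 0 := by
    rcases hα with h | h
    · exact sub_ne_zero.mpr (ne_of_lt h.2)
    · exact sub_ne_zero.mpr (ne_of_gt h)
  have hκpos : 0 < |1 / (α - 1)| := abs_pos.mpr (div_ne_zero one_ne_zero hα1)
  set κ : ℝ := |1 / (α - 1)| with hκdef
  set L : ℝ := (∑ j, w j * petzRenyi α (A j) U) - ∑ j, w j * petzRenyi α (A j) V with hLdef
  have key : ∀ r : ℝ, 0 ≤ r →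
      loewnerLE (Real.exp (-r) • mpow V (1 - α)) (mpow U (1 - α)) →
      loewnerLE (mpow U (1 - α)) (Real.exp r • mpow V (1 - α)) →
      L ≤ κ * r := by
    intro r hr h1 h2
    have hterm : ∀ j, w j * petzRenyi α (A j) U - w j * petzRenyi α (A j) V
        ≤ w j * (κ * r) := by
      intro j
      have hineq := petz_diff_le' (hA j).1 (hA j).2 hU hV h1 h2
      calc w j * petzRenyi α (A j) U - w j * petzRenyi α (A j) V
          = w j * (petzRenyi α (A j) U - petzRenyi α (A j) V) := by ring
        _ ≤ w j * (κ * r) := mul_le_mul_of_nonneg_left hineq (hw j).le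
    calc L = ∑ j, (w j * petzRenyi α (A j) U - w j * petzRenyi α (A j) V) := by
          rw [hLdef, Finset.sum_sub_distrib]
      _ ≤ ∑ j, w j * (κ * r) := Finset.sum_le_sum fun j _ => hterm j
      _ = (∑ j, w j) * (κ * r) := by rw [Finset.sum_mul]
      _ = κ * r := by rw [hw1, one_mul]
  have hbound : ∀ x ∈ {x : EReal | ∃ r : ℝ, 0 ≤ r ∧ x = (r : EReal) ∧
      loewnerLE (Real.exp (-r) • mpow V (1 - α)) (mpow U (1 - α)) ∧
      loewnerLE (mpow U (1 - α)) (Real.exp r • mpow V (1 - α))},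
      ((L / κ : ℝ) : EReal) ≤ x := by
    rintro x ⟨r, hr, rfl, h1, h2⟩
    refine EReal.coe_le_coe_iff.mpr ?_
    rw [div_le_iff₀ hκpos]
    have := key r hr h1 h2
    linarith
  have hinf : ((L / κ : ℝ) : EReal) ≤ dTmat (mpow V (1 - α)) (mpow U (1 - α)) := by
    rw [dTmat]
    exact le_sInf hbound
  calc (L : EReal) = ((κ : ℝ) : EReal) * ((L / κ : ℝ) : EReal) := by
        rw [← EReal.coe_mul]
        congr 1
        field_simp
    _ ≤ ((κ : ℝ) : EReal) * dTmat (mpow V (1 - α)) (mpow U (1 - α)) :=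
        mul_le_mul_of_nonneg_left hinf (by exact_mod_cast hκpos.le)

end
end

section
/- Let α ∈ (0, 1) ∪ (1, ∞), let A be a density matrix in ℂ^{d×d}, and let U, V be positive definite Hermitian matrices in ℂ^{d×d}. Then | log Tr[A^α U^{1−α}] − log Tr[A^α V^{1−α}] | ≤ d_T( V^{1−α}, U^{1−α} ). -/
open scoped ComplexOrder
open Matrix

noncomputable section

namespace MyAux
variable {d : ℕ}

lemma col_dot (S M : Matrix (Fin d) (Fin d) ℂ) (hS : S.IsHermitian) (i : Fin d) :
    (S * M * S) i i = dotProduct (star (fun j => S j i)) (M *ᵥ (fun j => S j i)) := by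
  have hs : ∀ j, star (S j i) = S i j := fun j => by
    conv_rhs => rw [← hS.eq]
    simp [Matrix.conjTranspose_apply]
  simp only [mul_apply, dotProduct, mulVec, Pi.star_apply, hs, dotProduct]
  simp only [Finset.sum_mul, Finset.mul_sum, mul_assoc]
  exact Finset.sum_comm

lemma trace_conj_re (S M : Matrix (Fin d) (Fin d) ℂ) :
    (Matrix.trace (S * M * S)).re = ∑ i, ((S * M * S) i i).re := by
  rw [Matrix.trace, Complex.re_sum]
  rfl

open scoped MatrixOrder in
lemma trace_mul_re_nonneg {X M : Matrix (Fin d) (Fin d) ℂ} (hX : X.PosSemidef)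
    (hM : M.PosSemidef) : 0 ≤ (Matrix.trace (X * M)).re := by
  have h1 : X * M = (CFC.sqrt X) * (CFC.sqrt X) * M := by rw [CFC.sqrt_mul_sqrt_self X hX.nonneg]
  have h2 : Matrix.trace (X * M) = Matrix.trace ((CFC.sqrt X) * M * (CFC.sqrt X)) := by
    rw [h1]; exact (Matrix.trace_mul_cycle (CFC.sqrt X) M (CFC.sqrt X)).symm
  rw [h2, trace_conj_re]
  refine Finset.sum_nonneg fun i _ => ?_
  rw [col_dot _ _ (CFC.sqrt_nonneg X).posSemidef.isHermitian]
  simpa using hM.re_dotProduct_nonneg (fun j => (CFC.sqrt X) j i)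

open scoped MatrixOrder in
lemma trace_mul_re_pos {X M : Matrix (Fin d) (Fin d) ℂ} (hX : X.PosSemidef)
    (hXne : X ≠ 0) (hM : M.PosDef) : 0 < (Matrix.trace (X * M)).re := by
  have h1 : X * M = (CFC.sqrt X) * (CFC.sqrt X) * M := by rw [CFC.sqrt_mul_sqrt_self X hX.nonneg]
  have h2 : Matrix.trace (X * M) = Matrix.trace ((CFC.sqrt X) * M * (CFC.sqrt X)) := by
    rw [h1]; exact (Matrix.trace_mul_cycle (CFC.sqrt X) M (CFC.sqrt X)).symm
  rw [h2, trace_conj_re]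
  have hSne : (CFC.sqrt X) ≠ 0 := by
    intro h
    exact hXne (by rw [← CFC.sqrt_mul_sqrt_self X hX.nonneg, h, mul_zero])
  obtain ⟨j, i, hji⟩ : ∃ j i, (CFC.sqrt X) j i ≠ 0 := by
    by_contra h
    push_neg at h
    exact hSne (by ext j i; simpa using h j i)
  refine Finset.sum_pos' (fun k _ => ?_) ⟨i, Finset.mem_univ i, ?_⟩
  · rw [col_dot _ _ (CFC.sqrt_nonneg X).posSemidef.isHermitian]
    simpa using hM.posSemidef.re_dotProduct_nonneg (fun l => (CFC.sqrt X) l k)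
  · rw [col_dot _ _ (CFC.sqrt_nonneg X).posSemidef.isHermitian]
    have hcol : (fun l => (CFC.sqrt X) l i) ≠ 0 := by
      intro h
      exact hji (by simpa using congrFun h j)
    simpa using hM.re_dotProduct_pos hcol

lemma mpow_eq {A : Matrix (Fin d) (Fin d) ℂ} (hA : A.IsHermitian) (r : ℝ) :
    mpow A r = (hA.eigenvectorUnitary : Matrix (Fin d) (Fin d) ℂ) *
      Matrix.diagonal (fun i => ((hA.eigenvalues i ^ r : ℝ) : ℂ)) *
      star (hA.eigenvectorUnitary : Matrix (Fin d) (Fin d) ℂ) := dif_pos hA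

lemma mpow_posSemidef {A : Matrix (Fin d) (Fin d) ℂ} (hA : A.PosSemidef) (r : ℝ) :
    (mpow A r).PosSemidef := by
  rw [mpow_eq hA.isHermitian r, Matrix.star_eq_conjTranspose]
  refine Matrix.PosSemidef.mul_mul_conjTranspose_same ?_ _
  refine Matrix.posSemidef_diagonal_iff.mpr fun i => ?_
  exact_mod_cast Real.rpow_nonneg (hA.eigenvalues_nonneg i) r

lemma mpow_posDef {A : Matrix (Fin d) (Fin d) ℂ} (hA : A.PosDef) (r : ℝ) :
    (mpow A r).PosDef := by
  rw [mpow_eq hA.isHermitian r, posDef_iff_dotProduct_mulVec]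
  constructor
  · have h : (Matrix.diagonal (fun i => ((hA.isHermitian.eigenvalues i ^ r : ℝ) : ℂ))).IsHermitian := by
      refine Matrix.isHermitian_diagonal_iff.mpr fun i => ?_
      exact (IsSelfAdjoint.of_nonneg
        (by exact_mod_cast Real.rpow_nonneg (hA.posSemidef.eigenvalues_nonneg i) r))
    simp only [Matrix.IsHermitian, Matrix.star_eq_conjTranspose, conjTranspose_mul,
      conjTranspose_conjTranspose, h.eq, mul_assoc]
  · intro x hx
    set W : Matrix (Fin d) (Fin d) ℂ :=
      (hA.isHermitian.eigenvectorUnitary : Matrix (Fin d) (Fin d) ℂ)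
    have hW : W ∈ Matrix.unitaryGroup (Fin d) ℂ := hA.isHermitian.eigenvectorUnitary.2
    have hD : (Matrix.diagonal (fun i => ((hA.isHermitian.eigenvalues i ^ r : ℝ) : ℂ))).PosDef := by
      refine Matrix.posDef_diagonal_iff.mpr fun i => ?_
      exact_mod_cast Real.rpow_pos_of_pos (hA.eigenvalues_pos i) r
    have hy : Wᴴ *ᵥ x ≠ 0 := by
      intro h
      apply hx
      have h2 : W *ᵥ (Wᴴ *ᵥ x) = x := by
        rw [mulVec_mulVec, ← Matrix.star_eq_conjTranspose,
          (Matrix.mem_unitaryGroup_iff.mp hW : W * star W = 1), one_mulVec]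
      rw [h, mulVec_zero] at h2
      exact h2.symm
    have key : dotProduct (star x)
        ((W * Matrix.diagonal (fun i => ((hA.isHermitian.eigenvalues i ^ r : ℝ) : ℂ)) * star W) *ᵥ x)
        = dotProduct (star (Wᴴ *ᵥ x))
          (Matrix.diagonal (fun i => ((hA.isHermitian.eigenvalues i ^ r : ℝ) : ℂ)) *ᵥ (Wᴴ *ᵥ x)) := by
      rw [Matrix.star_eq_conjTranspose, ← mulVec_mulVec, ← mulVec_mulVec,
        Matrix.dotProduct_mulVec (star x) W, star_mulVec, conjTranspose_conjTranspose]
    rw [key]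
    exact (posDef_iff_dotProduct_mulVec.mp hD).2 hy

lemma trace_mpow {A : Matrix (Fin d) (Fin d) ℂ} (hA : A.IsHermitian) (r : ℝ) :
    Matrix.trace (mpow A r) = ∑ i, ((hA.eigenvalues i ^ r : ℝ) : ℂ) := by
  have h1 : star (hA.eigenvectorUnitary : Matrix (Fin d) (Fin d) ℂ) *
      (hA.eigenvectorUnitary : Matrix (Fin d) (Fin d) ℂ) = 1 :=
    Matrix.mem_unitaryGroup_iff'.mp hA.eigenvectorUnitary.2
  rw [mpow_eq hA r, Matrix.trace_mul_cycle, h1, one_mul, Matrix.trace_diagonal]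

lemma trace_eq_sum_eigenvalues {A : Matrix (Fin d) (Fin d) ℂ} (hA : A.IsHermitian) :
    Matrix.trace A = ∑ i, ((hA.eigenvalues i : ℝ) : ℂ) := by
  have h1 : star (hA.eigenvectorUnitary : Matrix (Fin d) (Fin d) ℂ) *
      (hA.eigenvectorUnitary : Matrix (Fin d) (Fin d) ℂ) = 1 :=
    Matrix.mem_unitaryGroup_iff'.mp hA.eigenvectorUnitary.2
  conv_lhs => rw [hA.spectral_theorem, Unitary.conjStarAlgAut_apply]
  rw [Matrix.trace_mul_cycle, h1, one_mul, Matrix.trace_diagonal]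
  rfl

end MyAux

/-- `|log Tr[A^α U^(1-α)] - log Tr[A^α V^(1-α)]| ≤ d_T(V^(1-α), U^(1-α))`. -/
theorem log_trace_thompson_bound {d : ℕ} (α : ℝ)
    (hα : α ∈ Set.Ioo (0 : ℝ) 1 ∪ Set.Ioi (1 : ℝ))
    (A : Matrix (Fin d) (Fin d) ℂ) (hA : IsDensityMatrix A)
    (U V : Matrix (Fin d) (Fin d) ℂ) (hU : U.PosDef) (hV : V.PosDef) :
    ((|Real.log (Matrix.trace (mpow A α * mpow U (1 - α))).re -
        Real.log (Matrix.trace (mpow A α * mpow V (1 - α))).re| : ℝ) : EReal) ≤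
      dTmat (mpow V (1 - α)) (mpow U (1 - α)) := by
  classical
  have hAh : A.IsHermitian := hA.1.isHermitian
  have hX : (mpow A α).PosSemidef := MyAux.mpow_posSemidef hA.1 α
  have hsum : ∑ i, hAh.eigenvalues i = 1 := by
    have h := MyAux.trace_eq_sum_eigenvalues hAh
    rw [hA.2] at h
    exact_mod_cast h.symm
  have hpos : ∃ i, 0 < hAh.eigenvalues i := by
    by_contra h
    push_neg at h
    have h0 : ∑ i, hAh.eigenvalues i = 0 :=
      Finset.sum_eq_zero fun i _ => le_antisymm (h i) (hA.1.eigenvalues_nonneg i)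
    rw [h0] at hsum
    exact zero_ne_one hsum
  have htrX : 0 < ∑ i, hAh.eigenvalues i ^ α := by
    obtain ⟨i, hi⟩ := hpos
    exact Finset.sum_pos' (fun j _ => Real.rpow_nonneg (hA.1.eigenvalues_nonneg j) α)
      ⟨i, Finset.mem_univ i, Real.rpow_pos_of_pos hi α⟩
  have hXne : mpow A α ≠ 0 := by
    intro h
    have ht := MyAux.trace_mpow hAh α
    rw [h, Matrix.trace_zero] at ht
    have h2 : (0 : ℝ) = ∑ i, hAh.eigenvalues i ^ α := by exact_mod_cast ht
    exact htrX.ne' h2.symm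
  have hPU : (mpow U (1 - α)).PosDef := MyAux.mpow_posDef hU (1 - α)
  have hPV : (mpow V (1 - α)).PosDef := MyAux.mpow_posDef hV (1 - α)
  have htU : 0 < (Matrix.trace (mpow A α * mpow U (1 - α))).re :=
    MyAux.trace_mul_re_pos hX hXne hPU
  have htV : 0 < (Matrix.trace (mpow A α * mpow V (1 - α))).re :=
    MyAux.trace_mul_re_pos hX hXne hPV
  refine le_sInf fun x hx => ?_
  obtain ⟨r, hr0, rfl, h1, h2⟩ := hx
  rw [EReal.coe_le_coe_iff]
  set tU := (Matrix.trace (mpow A α * mpow U (1 - α))).re with htUdef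
  set tV := (Matrix.trace (mpow A α * mpow V (1 - α))).re with htVdef
  have mono : ∀ M N : Matrix (Fin d) (Fin d) ℂ, loewnerLE M N →
      (Matrix.trace (mpow A α * M)).re ≤ (Matrix.trace (mpow A α * N)).re := by
    intro M N h
    have h0 := MyAux.trace_mul_re_nonneg hX h
    rw [mul_sub, Matrix.trace_sub, Complex.sub_re] at h0
    linarith
  have hsm : ∀ (c : ℝ) (M : Matrix (Fin d) (Fin d) ℂ),
      (Matrix.trace (mpow A α * (c • M))).re = c * (Matrix.trace (mpow A α * M)).re := by
    intro c M
    rw [Matrix.mul_smul, Matrix.trace_smul]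
    simp [Complex.real_smul]
  have k1 := mono _ _ h1
  rw [hsm] at k1
  have k2 := mono _ _ h2
  rw [hsm] at k2
  have k1' : tV ≤ Real.exp r * tU := by
    have h3 := mul_le_mul_of_nonneg_left k1 (Real.exp_nonneg r)
    rw [← mul_assoc, ← Real.exp_add] at h3
    simpa using h3
  rw [abs_sub_le_iff]
  constructor
  · have h4 := Real.log_le_log htU k2
    rw [Real.log_mul (Real.exp_pos r).ne' htV.ne', Real.log_exp] at h4
    linarith
  · have h4 := Real.log_le_log htV k1'
    rw [Real.log_mul (Real.exp_pos r).ne' htU.ne', Real.log_exp] at h4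
    linarith


end
end
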